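/- Fix d ≥ 2, an integer 1 ≤ t < 2d and a t-approximation A. For a finite regular odd set S approximated by A, define D(S) := (Odd ∩ A* ∩ S) ∪ (Even ∩ A* ∩ S^c). Then the map S ↦ D(S) is injective on the collection of finite regular odd sets approximated by A, and for every such S, D(S) is a minimal vertex-cover of the subgraph of ℤ^d induced by A*. -/

import Mathlib

/-- The nearest-neighbor lattice graph on `ℤ^d`: two vertices are adjacent
iff they differ by one in exactly one coordinate (equivalently, ℓ¹-distance 1). -/
def ZGraph (d : ℕ) : SimpleGraph (Fin d → ℤ) where
  Adj u v := ∑ i, (u i - v i).natAbs = 1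
  symm := by
    constructor
    intro u v h
    have e : ∀ i, (v i - u i).natAbs = (u i - v i).natAbs := fun i => by
      rw [← Int.natAbs_neg, neg_sub]
    simpa only [e] using h
  loopless := by
    constructor
    intro u h
    simp at h

/-- A vertex is odd if its coordinate sum is odd. -/
def OddVert {d : ℕ} (v : Fin d → ℤ) : Prop := Odd (∑ i, v i)

/-- A vertex is even if its coordinate sum is even. -/
def EvenVert {d : ℕ} (v : Fin d → ℤ) : Prop := Even (∑ i, v i)

/-- Internal vertex-boundary of `U`. -/
def intBdry (d : ℕ) (U : Set (Fin d → ℤ)) : Set (Fin d → ℤ) :=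
  {u ∈ U | ∃ v, (ZGraph d).Adj u v ∧ v ∉ U}

/-- External vertex-boundary of `U`. -/
def extBdry (d : ℕ) (U : Set (Fin d → ℤ)) : Set (Fin d → ℤ) :=
  {v | v ∉ U ∧ ∃ u ∈ U, (ZGraph d).Adj u v}

/-- A set is odd if its internal vertex-boundary consists of odd vertices. -/
def IsOddSet (d : ℕ) (U : Set (Fin d → ℤ)) : Prop := ∀ u ∈ intBdry d U, OddVert u

/-- A set is even if its internal vertex-boundary consists of even vertices. -/
def IsEvenSet (d : ℕ) (U : Set (Fin d → ℤ)) : Prop := ∀ u ∈ intBdry d U, EvenVert u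

/-- The edge-boundary of `U`: edges with exactly one endpoint in `U`. -/
def edgeBdry (d : ℕ) (U : Set (Fin d → ℤ)) : Set (Sym2 (Fin d → ℤ)) :=
  {e | ∃ u v, (ZGraph d).Adj u v ∧ u ∈ U ∧ v ∉ U ∧ e = s(u, v)}

/-- A cutset: a non-empty finite subset of `ℤ^d` which is connected and co-connected. -/
def IsCutset (d : ℕ) (U : Set (Fin d → ℤ)) : Prop :=
  U.Finite ∧ U.Nonempty ∧ ((ZGraph d).induce U).Connected ∧ ((ZGraph d).induce Uᶜ).Connected

/-- `OCC d n`: the number of odd cutsets in `ℤ^d` containing the origin with `n` boundary edges. -/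
noncomputable def OCC (d n : ℕ) : ℕ :=
  {S : Set (Fin d → ℤ) | IsCutset d S ∧ IsOddSet d S ∧ (0 : Fin d → ℤ) ∈ S ∧
    (edgeBdry d S).ncard = n}.ncard

/-- A set is regular if both it and its complement have no isolated vertices. -/
def IsRegularSet (d : ℕ) (U : Set (Fin d → ℤ)) : Prop :=
  (∀ u ∈ U, ∃ v ∈ U, (ZGraph d).Adj u v) ∧ (∀ u ∉ U, ∃ v ∉ U, (ZGraph d).Adj u v)

/-- The graph `(ℤ^d)^{⊗r}` where two vertices are adjacent iff their lattice distance is ≤ r. -/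
def PowGraph (d r : ℕ) : SimpleGraph (Fin d → ℤ) where
  Adj u v := u ≠ v ∧ (ZGraph d).dist u v ≤ r
  symm := by
    constructor
    rintro u v ⟨h1, h2⟩
    exact ⟨h1.symm, by rwa [SimpleGraph.dist_comm]⟩
  loopless := by constructor; rintro u ⟨h, -⟩; exact h rfl

/-- An `r`-cutset: a finite regular set, connected and co-connected in `(ℤ^d)^{⊗r}`. -/
def IsRCutset (d r : ℕ) (U : Set (Fin d → ℤ)) : Prop :=
  U.Finite ∧ IsRegularSet d U ∧
    ((PowGraph d r).induce U).Connected ∧ ((PowGraph d r).induce Uᶜ).Connected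

/-- An approximation: a pair of disjoint subsets of `ℤ^d`, the first odd, the second even. -/
structure Approx (d : ℕ) where
  inn : Set (Fin d → ℤ)
  out : Set (Fin d → ℤ)
  disj : Disjoint inn out
  inn_odd : IsOddSet d inn
  out_even : IsEvenSet d out

/-- The set of unknown vertices of an approximation. -/
def Approx.star {d : ℕ} (A : Approx d) : Set (Fin d → ℤ) := (A.inn ∪ A.out)ᶜ

/-- `A` approximates `S` if `A.inn ⊆ S` and `A.out ⊆ Sᶜ`. -/
def Approximates {d : ℕ} (A : Approx d) (S : Set (Fin d → ℤ)) : Prop :=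
  A.inn ⊆ S ∧ A.out ⊆ Sᶜ

/-- A `t`-approximation: the subgraph induced on the unknown vertices has
maximum degree at most `t` and no isolated vertices. -/
def IsTApprox (d t : ℕ) (A : Approx d) : Prop :=
  (∀ v ∈ A.star, ({u ∈ A.star | (ZGraph d).Adj v u}).ncard ≤ t) ∧
  (∀ v ∈ A.star, ∃ u ∈ A.star, (ZGraph d).Adj v u)

/-- The neighborhood `N(U)` of a set. -/
def nbrSet (d : ℕ) (U : Set (Fin d → ℤ)) : Set (Fin d → ℤ) :=
  {v | ∃ u ∈ U, (ZGraph d).Adj v u}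

/-- `U⁺ = U ∪ N(U)`. -/
def plus (d : ℕ) (U : Set (Fin d → ℤ)) : Set (Fin d → ℤ) := U ∪ nbrSet d U

/-- `W` separates `S` if every boundary edge of `S` has an endpoint in `W`. -/
def Separates (d : ℕ) (W S : Set (Fin d → ℤ)) : Prop :=
  ∀ a b : Fin d → ℤ, s(a, b) ∈ edgeBdry d S → a ∈ W ∨ b ∈ W

/-- `D(S) = (Odd ∩ A* ∩ S) ∪ (Even ∩ A* ∩ Sᶜ)`. -/
def Dmap (d : ℕ) (A : Approx d) (S : Set (Fin d → ℤ)) : Set (Fin d → ℤ) :=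
  {v ∈ A.star ∩ S | OddVert v} ∪ {v ∈ A.star ∩ Sᶜ | EvenVert v}

/-- `D` is a minimal vertex-cover of the subgraph of `ℤ^d` induced by `V`. -/
def IsMinVC (d : ℕ) (V D : Set (Fin d → ℤ)) : Prop :=
  D ⊆ V ∧ (∀ u ∈ V, ∀ v ∈ V, (ZGraph d).Adj u v → u ∈ D ∨ v ∈ D) ∧
  ∀ D' ⊆ D, (∀ u ∈ V, ∀ v ∈ V, (ZGraph d).Adj u v → u ∈ D' ∨ v ∈ D') → D' = D


private lemma castZMod2_eq_one_iff_odd (x : ℤ) : (x : ZMod 2) = 1 ↔ Odd x := by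
  constructor
  · intro h
    rcases Int.even_or_odd x with ⟨k, hk⟩ | ho
    · exfalso; subst hk; push_cast at h
      rw [show ((k:ZMod 2) + k) = 2 * k by ring] at h
      rw [show ((2:ZMod 2)) = 0 by decide, zero_mul] at h
      exact absurd h (by decide)
    · exact ho
  · rintro ⟨k, hk⟩
    subst hk; push_cast
    rw [show ((2:ZMod 2)) = 0 by decide]; ring

private lemma adj_parity {d : ℕ} {u v : Fin d → ℤ} (h : (ZGraph d).Adj u v) :
    OddVert u ↔ ¬ OddVert v := by
  show Odd (∑ i, u i) ↔ ¬ Odd (∑ i, v i)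
  have hsum : ∑ i, (u i - v i).natAbs = 1 := h
  have hneg : ∀ a : ZMod 2, -a = a := by decide
  have h2 : ∀ i : Fin d, ((u i - v i : ℤ) : ZMod 2) = ((u i - v i).natAbs : ZMod 2) := by
    intro i
    set n := (u i - v i).natAbs with hn
    rcases Int.natAbs_eq (u i - v i) with he | he
    · rw [he]; exact Int.cast_natCast _
    · rw [he, Int.cast_neg, Int.cast_natCast, hneg]
  have key : ((∑ i, u i : ℤ) : ZMod 2) = ((∑ i, v i : ℤ) : ZMod 2) + 1 := by
    have step : ((∑ i, u i : ℤ) : ZMod 2) - ((∑ i, v i : ℤ) : ZMod 2)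
        = ((∑ i, (u i - v i).natAbs : ℕ) : ZMod 2) := by
      rw [Int.cast_sum, Int.cast_sum, ← Finset.sum_sub_distrib, Nat.cast_sum]
      exact Finset.sum_congr rfl fun i _ => by rw [← Int.cast_sub, h2 i]
    rw [hsum, Nat.cast_one] at step
    linear_combination step
  rw [← castZMod2_eq_one_iff_odd, ← castZMod2_eq_one_iff_odd, key]
  generalize ((∑ i, v i : ℤ) : ZMod 2) = a
  revert a; decide

private lemma even_not_odd {d : ℕ} {v : Fin d → ℤ} (h : EvenVert v) : ¬ OddVert v :=
  Int.not_odd_iff_even.mpr h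

private lemma not_odd_even {d : ℕ} {v : Fin d → ℤ} (h : ¬ OddVert v) : EvenVert v :=
  (Int.even_or_odd _).resolve_right h

private lemma mem_Dmap_iff {d : ℕ} {A : Approx d} {S : Set (Fin d → ℤ)} {v : Fin d → ℤ} :
    v ∈ Dmap d A S ↔ v ∈ A.star ∧ ((OddVert v ∧ v ∈ S) ∨ (¬ OddVert v ∧ v ∉ S)) := by
  constructor
  · rintro (⟨⟨h1, h2⟩, h3⟩ | ⟨⟨h1, h2⟩, h3⟩)
    · exact ⟨h1, Or.inl ⟨h3, h2⟩⟩
    · exact ⟨h1, Or.inr ⟨even_not_odd h3, h2⟩⟩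
  · rintro ⟨h1, ⟨h2, h3⟩ | ⟨h2, h3⟩⟩
    · exact Or.inl ⟨⟨h1, h3⟩, h2⟩
    · exact Or.inr ⟨⟨h1, h3⟩, not_odd_even h2⟩

private lemma odd_mem_iff {d : ℕ} {A : Approx d} {S : Set (Fin d → ℤ)} {v : Fin d → ℤ}
    (hv : v ∈ A.star) (ho : OddVert v) : v ∈ S ↔ v ∈ Dmap d A S := by
  rw [mem_Dmap_iff]; tauto

private lemma even_mem_iff {d : ℕ} {A : Approx d} {S : Set (Fin d → ℤ)} {v : Fin d → ℤ}
    (hv : v ∈ A.star) (ho : ¬ OddVert v) : v ∈ S ↔ v ∉ Dmap d A S := by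
  rw [mem_Dmap_iff]; tauto

private lemma Dmap_cover {d : ℕ} {A : Approx d} {S : Set (Fin d → ℤ)}
    (hodd : IsOddSet d S) {u v : Fin d → ℤ}
    (hu : u ∈ A.star) (hv : v ∈ A.star) (hadj : (ZGraph d).Adj u v) :
    u ∈ Dmap d A S ∨ v ∈ Dmap d A S := by
  have hpar := adj_parity hadj
  by_cases hou : OddVert u
  · by_cases hus : u ∈ S
    · exact Or.inl (mem_Dmap_iff.mpr ⟨hu, Or.inl ⟨hou, hus⟩⟩)
    · by_cases hvs : v ∈ S
      · exact absurd (hodd v ⟨hvs, u, (ZGraph d).adj_symm hadj, hus⟩) (hpar.mp hou)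
      · exact Or.inr (mem_Dmap_iff.mpr ⟨hv, Or.inr ⟨hpar.mp hou, hvs⟩⟩)
  · have hov : OddVert v := by tauto
    by_cases hvs : v ∈ S
    · exact Or.inr (mem_Dmap_iff.mpr ⟨hv, Or.inl ⟨hov, hvs⟩⟩)
    · by_cases hus : u ∈ S
      · exact absurd (hodd u ⟨hus, v, hadj, hvs⟩) hou
      · exact Or.inl (mem_Dmap_iff.mpr ⟨hu, Or.inr ⟨hou, hus⟩⟩)

private lemma exists_nbr_not_Dmap {d : ℕ} {A : Approx d} {S : Set (Fin d → ℤ)}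
    (hreg : IsRegularSet d S) (hap : Approximates A S) {v : Fin d → ℤ}
    (hv : v ∈ Dmap d A S) :
    ∃ w ∈ A.star, (ZGraph d).Adj v w ∧ w ∉ Dmap d A S := by
  obtain ⟨hstar, hcase⟩ := mem_Dmap_iff.mp hv
  rcases hcase with ⟨ho, hs⟩ | ⟨hno, hns⟩
  · obtain ⟨w, hwS, hadj⟩ := hreg.1 v hs
    have hwodd : ¬ OddVert w := (adj_parity hadj).mp ho
    have hwout : w ∉ A.out := fun hw => (hap.2 hw) hwS
    have hwinn : w ∉ A.inn := by
      intro hw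
      exact hwodd (A.inn_odd w ⟨hw, v, (ZGraph d).adj_symm hadj, fun hv' => hstar (Or.inl hv')⟩)
    have hwstar : w ∈ A.star := by
      intro hy; rcases hy with h | h
      exacts [hwinn h, hwout h]
    refine ⟨w, hwstar, hadj, ?_⟩
    rw [mem_Dmap_iff]; tauto
  · obtain ⟨w, hwS, hadj⟩ := hreg.2 v hns
    have hwodd : OddVert w := by have := adj_parity hadj; tauto
    have hwinn : w ∉ A.inn := fun hw => hwS (hap.1 hw)
    have hwout : w ∉ A.out := by
      intro hw
      exact even_not_odd (A.out_even w ⟨hw, v, (ZGraph d).adj_symm hadj, fun hv' => hstar (Or.inr hv')⟩) hwodd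
    have hwstar : w ∈ A.star := by
      intro hy; rcases hy with h | h
      exacts [hwinn h, hwout h]
    refine ⟨w, hwstar, hadj, ?_⟩
    rw [mem_Dmap_iff]; tauto

/-- The map `S ↦ D(S)` is injective on finite regular odd sets approximated by a
`t`-approximation `A`, and `D(S)` is always a minimal vertex-cover of `A*`. -/
theorem Dmap_injective_and_minimal_cover (d t : ℕ) (hd : 2 ≤ d) (ht1 : 1 ≤ t)
    (ht2 : t < 2 * d) (A : Approx d) (hA : IsTApprox d t A) :
    (∀ S₁ S₂ : Set (Fin d → ℤ),
      S₁.Finite ∧ IsRegularSet d S₁ ∧ IsOddSet d S₁ ∧ Approximates A S₁ →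
      S₂.Finite ∧ IsRegularSet d S₂ ∧ IsOddSet d S₂ ∧ Approximates A S₂ →
      Dmap d A S₁ = Dmap d A S₂ → S₁ = S₂) ∧
    ∀ S : Set (Fin d → ℤ), S.Finite → IsRegularSet d S → IsOddSet d S →
      Approximates A S → IsMinVC d A.star (Dmap d A S) := by
  constructor
  · rintro S₁ S₂ ⟨-, -, -, hap1⟩ ⟨-, -, -, hap2⟩ hD
    ext v
    by_cases hv : v ∈ A.star
    · by_cases ho : OddVert v
      · rw [odd_mem_iff hv ho, hD]
        exact (odd_mem_iff hv ho).symm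
      · rw [even_mem_iff hv ho, hD]
        exact (even_mem_iff hv ho).symm
    · rcases Set.notMem_compl_iff.mp hv with h | h
      · exact iff_of_true (hap1.1 h) (hap2.1 h)
      · exact iff_of_false (hap1.2 h) (hap2.2 h)
  · rintro S hfin hreg hodd hap
    refine ⟨fun v hv => (mem_Dmap_iff.mp hv).1,
      fun u hu v hv hadj => Dmap_cover hodd hu hv hadj, ?_⟩
    intro D' hsub hcov
    refine Set.Subset.antisymm hsub (fun v hv => ?_)
    obtain ⟨w, hwstar, hadj, hwD⟩ := exists_nbr_not_Dmap hreg hap hv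
    rcases hcov v (mem_Dmap_iff.mp hv).1 w hwstar hadj with h | h
    · exact h
    · exact absurd (hsub h) hwD
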